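/- Suppose (M,ω) is a closed symplectic manifold satisfying the energy–capacity inequality: every closed ball B displaceable by a Hamiltonian diffeomorphism has positive displacement energy e(B) = inf{‖K‖ : φ_K¹(B) ∩ B = ∅} > 0. Let φ_{H_i} be a sequence of smooth Hamiltonian paths and φ_H a smooth Hamiltonian path such that ‖H̄ # H_i‖ → 0 and φ_{H_i}¹ converges uniformly to a map ψ : M → M. Then ψ = φ_H¹. -/

import Mathlib

open Filter Topology Metric

/-- Proposition 3.6: on a closed symplectic manifold satisfying the energy–capacity
inequality (every closed ball displaceable by a Hamiltonian diffeomorphism has positive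
displacement energy, where `ν` denotes the Hofer norm), if `φ_{H_i}` are Hamiltonian paths
with `‖H̄#H_i‖ → 0` (so that the Hofer norms `ν((φ_H¹)⁻¹φ_{H_i}¹) → 0`) and the time-one
maps `ψ_i = φ_{H_i}¹` converge uniformly to a map `ψ`, then `ψ = φ_H¹ = φ`. -/
theorem stmt7 (M : Type*) [MetricSpace M] [CompactSpace M]
    (Ham : Set (Homeomorph M M)) (ν : Homeomorph M M → ℝ)
    (hEC : ∀ (x : M) (r : ℝ), 0 < r →
      (∃ g ∈ Ham, Disjoint ((⇑g) '' closedBall x r) (closedBall x r)) →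
      ∃ e > 0, ∀ g ∈ Ham, Disjoint ((⇑g) '' closedBall x r) (closedBall x r) → e ≤ ν g)
    (φ : Homeomorph M M) (ψi : ℕ → Homeomorph M M) (ψ : M → M)
    (hmem : ∀ i, (ψi i).trans φ.symm ∈ Ham)
    (hν : Tendsto (fun i => ν ((ψi i).trans φ.symm)) atTop (𝓝 0))
    (hC0 : TendstoUniformly (fun i x => ψi i x) ψ atTop) :
    ψ = ⇑φ := by
  by_contra hne
  have hψc : Continuous ψ :=
    hC0.continuous (Eventually.of_forall fun i => (ψi i).continuous).frequently
  obtain ⟨x₀, hx₀⟩ : ∃ x, ψ x ≠ φ x := by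
    by_contra h; push_neg at h; exact hne (funext h)
  set y := φ.symm (ψ x₀) with hy
  have hd : 0 < dist y x₀ := by
    rw [dist_pos]
    intro h
    apply hx₀
    have := congrArg φ h
    simpa [hy] using this
  set d := dist y x₀ with hdd
  have hg : Continuous (fun z => φ.symm (ψ z)) := φ.symm.continuous.comp hψc
  obtain ⟨δ, hδ, hδ'⟩ := Metric.continuous_iff.mp hg x₀ (d / 4) (by positivity)
  set r := min (δ / 2) (d / 4) with hr
  have hrpos : 0 < r := lt_min (by positivity) (by positivity)
  have hr4 : r ≤ d / 4 := min_le_right _ _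
  have hball : ∀ z ∈ closedBall x₀ r, dist (φ.symm (ψ z)) y < d / 4 := by
    intro z hz
    have hz' : dist z x₀ < δ :=
      lt_of_le_of_lt (mem_closedBall.mp hz)
        (lt_of_le_of_lt (min_le_left _ _) (by linarith))
    exact hδ' z hz'
  have hUC : UniformContinuous (φ.symm : M → M) :=
    CompactSpace.uniformContinuous_of_continuous φ.symm.continuous
  have hTU : TendstoUniformly (fun i x => φ.symm (ψi i x)) (fun x => φ.symm (ψ x)) atTop :=
    hUC.comp_tendstoUniformly hC0
  have hev : ∀ᶠ i in atTop, ∀ x, dist (φ.symm (ψi i x)) (φ.symm (ψ x)) < d / 4 := by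
    have h := (Metric.tendstoUniformly_iff.mp hTU) (d / 4) (by positivity)
    filter_upwards [h] with i hi x
    simpa [dist_comm] using hi x
  have hdisj : ∀ᶠ i in atTop,
      Disjoint ((⇑((ψi i).trans φ.symm)) '' closedBall x₀ r) (closedBall x₀ r) := by
    filter_upwards [hev] with i hi
    rw [Set.disjoint_left]
    rintro _ ⟨z, hz, rfl⟩ hmem'
    have h1 : dist (φ.symm (ψi i z)) y < d / 2 := by
      have h3 := hi z
      have h4 := hball z hz
      calc dist (φ.symm (ψi i z)) y
          ≤ dist (φ.symm (ψi i z)) (φ.symm (ψ z)) + dist (φ.symm (ψ z)) y :=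
            dist_triangle _ _ _
        _ < d / 4 + d / 4 := by linarith
        _ = d / 2 := by ring
    have h2 : dist (φ.symm (ψi i z)) x₀ ≤ r := by
      simpa [Homeomorph.trans_apply] using mem_closedBall.mp hmem'
    have h5 : d ≤ dist y (φ.symm (ψi i z)) + dist (φ.symm (ψi i z)) x₀ := dist_triangle _ _ _
    rw [dist_comm] at h1
    linarith
  obtain ⟨i₀, hi₀⟩ := hdisj.exists
  obtain ⟨e, he, hbound⟩ := hEC x₀ r hrpos ⟨_, hmem i₀, hi₀⟩
  have hν' : ∀ᶠ i in atTop, ν ((ψi i).trans φ.symm) < e := hν.eventually_lt_const he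
  obtain ⟨i, hdi, hνi⟩ := (hdisj.and hν').exists
  exact absurd (hbound _ (hmem i) hdi) (not_le.mpr hνi)
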